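/- Direct parameterization of the well-posedness condition: a matrix W ∈ ℝⁿˣⁿ satisfies 2Λ - ΛW - WᵀΛ ≽ 2εΛΨΛ ≻ 0 for the positive diagonal matrix Λ = Ψ⁻¹ if and only if W = I - Ψ(VᵀV + εI + S) for some V ∈ ℝⁿˣⁿ, skew-symmetric S, positive diagonal Ψ, and ε > 0. In particular, for any V, skew-symmetric S, positive diagonal Ψ and ε > 0, the matrix W = I - Ψ(VᵀV + εI + S) satisfies 2Ψ⁻¹ - Ψ⁻¹W - WᵀΨ⁻¹ ≻ 0. -/

import Mathlib

open Matrix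

private lemma exists_pos_le_aux {n : ℕ} (f : Fin n → ℝ) (hf : ∀ i, 0 < f i) :
    ∃ c : ℝ, 0 < c ∧ ∀ i, c ≤ f i := by
  cases n with
  | zero => exact ⟨1, one_pos, fun i => i.elim0⟩
  | succ m =>
    have hne : (Finset.univ : Finset (Fin (m + 1))).Nonempty := Finset.univ_nonempty
    refine ⟨Finset.univ.inf' hne f, ?_, fun i => Finset.inf'_le f (Finset.mem_univ i)⟩
    obtain ⟨i, -, hi⟩ := Finset.exists_mem_eq_inf' hne f
    rw [hi]; exact hf i

private lemma psd_smul_aux {m : Type*} [Fintype m] {M : Matrix m m ℝ} (h : M.PosSemidef)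
    {c : ℝ} (hc : 0 ≤ c) : (c • M).PosSemidef := by
  refine ⟨?_, fun x => ?_⟩
  · unfold Matrix.IsHermitian at *
    rw [conjTranspose_smul, h.1]
    congr 1
  · exact (h.smul hc).2 x

/-- Direct parameterization of the well-posedness condition. With `Λ = Ψ⁻¹`
(`Ψ` positive diagonal): `W` satisfies `2Λ - ΛW - WᵀΛ ≽ 2εΛΨΛ ≻ 0` for some
`ε > 0` iff `W = I - Ψ(VᵀV + εI + S)` for some `V`, skew-symmetric `S` and
`ε > 0`.  In particular any such `W` satisfies `2Ψ⁻¹ - Ψ⁻¹W - WᵀΨ⁻¹ ≻ 0`. -/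
theorem direct_parameterization_wellposed
    {n : ℕ} (ψ : Fin n → ℝ) (hψ : ∀ i, 0 < ψ i)
    (Ψ : Matrix (Fin n) (Fin n) ℝ) (hΨ : Ψ = Matrix.diagonal ψ)
    (Λ : Matrix (Fin n) (Fin n) ℝ) (hΛ : Λ = Matrix.diagonal fun i => (ψ i)⁻¹) :
    (∀ W : Matrix (Fin n) (Fin n) ℝ,
      ((∃ ε : ℝ, 0 < ε ∧
          ((2 : ℝ) • Λ - Λ * W - Wᵀ * Λ - ((2 * ε) • (Λ * Ψ * Λ))).PosSemidef ∧
          ((2 * ε) • (Λ * Ψ * Λ)).PosDef) ↔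
        (∃ (V S : Matrix (Fin n) (Fin n) ℝ) (ε : ℝ), 0 < ε ∧ S = -Sᵀ ∧
          W = 1 - Ψ * (Vᵀ * V + ε • (1 : Matrix (Fin n) (Fin n) ℝ) + S)))) ∧
    (∀ (V S : Matrix (Fin n) (Fin n) ℝ) (ε : ℝ), 0 < ε → S = -Sᵀ →
      ((2 : ℝ) • Λ - Λ * (1 - Ψ * (Vᵀ * V + ε • (1 : Matrix (Fin n) (Fin n) ℝ) + S)) -
        (1 - Ψ * (Vᵀ * V + ε • (1 : Matrix (Fin n) (Fin n) ℝ) + S))ᵀ * Λ).PosDef) := by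
  have hΛΨ : Λ * Ψ = 1 := by
    rw [hΛ, hΨ, diagonal_mul_diagonal]
    rw [show (fun i => (ψ i)⁻¹ * ψ i) = fun _ : Fin n => (1 : ℝ) from
      funext fun i => inv_mul_cancel₀ (hψ i).ne', diagonal_one]
  have hΨΛ : Ψ * Λ = 1 := by
    rw [hΨ, hΛ, diagonal_mul_diagonal]
    rw [show (fun i => ψ i * (ψ i)⁻¹) = fun _ : Fin n => (1 : ℝ) from
      funext fun i => mul_inv_cancel₀ (hψ i).ne', diagonal_one]
  have hΛΨΛ : Λ * Ψ * Λ = Λ := by rw [hΛΨ, one_mul]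
  have hΛT : Λᵀ = Λ := by rw [hΛ, diagonal_transpose]
  have hΨT : Ψᵀ = Ψ := by rw [hΨ, diagonal_transpose]
  -- the main algebraic identity
  have key : ∀ T : Matrix (Fin n) (Fin n) ℝ,
      (2 : ℝ) • Λ - Λ * (1 - Ψ * T) - (1 - Ψ * T)ᵀ * Λ = T + Tᵀ := by
    intro T
    have h1 : Λ * (1 - Ψ * T) = Λ - T := by
      rw [Matrix.mul_sub, Matrix.mul_one, ← Matrix.mul_assoc, hΛΨ, Matrix.one_mul]
    have h2 : (1 - Ψ * T)ᵀ * Λ = Λ - Tᵀ := by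
      rw [transpose_sub, transpose_one, transpose_mul, hΨT, Matrix.sub_mul, Matrix.one_mul,
        Matrix.mul_assoc, hΨΛ, Matrix.mul_one]
    rw [h1, h2, two_smul]
    abel
  have keyVS : ∀ (V S : Matrix (Fin n) (Fin n) ℝ) (ε : ℝ), S = -Sᵀ →
      (2 : ℝ) • Λ - Λ * (1 - Ψ * (Vᵀ * V + ε • 1 + S)) -
        (1 - Ψ * (Vᵀ * V + ε • 1 + S))ᵀ * Λ
        = (2 : ℝ) • (Vᵀ * V) + (2 * ε) • (1 : Matrix (Fin n) (Fin n) ℝ) := by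
    intro V S ε hS
    rw [key]
    have hSt : Sᵀ = -S := by
      conv_lhs => rw [hS]
      rw [transpose_neg, transpose_transpose]
    rw [transpose_add, transpose_add, transpose_mul, transpose_transpose, transpose_smul,
      transpose_one, hSt, two_smul, two_mul, add_smul]
    abel
  have hpart2 : ∀ (V S : Matrix (Fin n) (Fin n) ℝ) (ε : ℝ), 0 < ε → S = -Sᵀ →
      ((2 : ℝ) • Λ - Λ * (1 - Ψ * (Vᵀ * V + ε • (1 : Matrix (Fin n) (Fin n) ℝ) + S)) -
        (1 - Ψ * (Vᵀ * V + ε • (1 : Matrix (Fin n) (Fin n) ℝ) + S))ᵀ * Λ).PosDef := by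
    intro V S ε hε hS
    rw [keyVS V S ε hS]
    have h1 : ((2 : ℝ) • (Vᵀ * V)).PosSemidef := by
      have : (Vᵀ * V).PosSemidef := by
        have := Matrix.posSemidef_conjTranspose_mul_self V
        rwa [conjTranspose_eq_transpose_of_trivial] at this
      exact psd_smul_aux this (by norm_num)
    have h2 : ((2 * ε) • (1 : Matrix (Fin n) (Fin n) ℝ)).PosDef := by
      rw [← diagonal_one, ← diagonal_smul]
      exact posDef_diagonal_iff.mpr fun i => by
        simpa using mul_pos (by norm_num : (0:ℝ) < 2) hε
    exact Matrix.PosDef.posSemidef_add h1 h2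
  refine ⟨fun W => ⟨?_, ?_⟩, hpart2⟩
  · -- forward direction
    rintro ⟨ε, hε, hPSD, -⟩
    obtain ⟨c, hc, hcle⟩ := exists_pos_le_aux (fun i => (ψ i)⁻¹) fun i => inv_pos.mpr (hψ i)
    set ε' : ℝ := ε * c with hε'
    have hε'pos : 0 < ε' := mul_pos hε hc
    -- K := 2Λ - ΛW - WᵀΛ - 2ε'•1 is PSD
    have hdiag : ((2 * ε) • Λ - (2 * ε') • (1 : Matrix (Fin n) (Fin n) ℝ)).PosSemidef := by
      rw [hΛ, ← diagonal_one, ← diagonal_smul, ← diagonal_smul, diagonal_sub]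
      refine posSemidef_diagonal_iff.mpr fun i => ?_
      simp only [Pi.sub_apply, Pi.smul_apply, smul_eq_mul, mul_one]
      have : ε' ≤ ε * (ψ i)⁻¹ := by
        rw [hε']
        exact mul_le_mul_of_nonneg_left (hcle i) hε.le
      nlinarith
    set K : Matrix (Fin n) (Fin n) ℝ :=
      (2 : ℝ) • Λ - Λ * W - Wᵀ * Λ - (2 * ε') • (1 : Matrix (Fin n) (Fin n) ℝ) with hK
    have hKpsd : K.PosSemidef := by
      have : K = ((2 : ℝ) • Λ - Λ * W - Wᵀ * Λ - ((2 * ε) • (Λ * Ψ * Λ)))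
          + ((2 * ε) • Λ - (2 * ε') • (1 : Matrix (Fin n) (Fin n) ℝ)) := by
        rw [hΛΨΛ, hK]; abel
      rw [this]
      exact hPSD.add hdiag
    have hhalf : (((1 : ℝ)/2) • K).PosSemidef := psd_smul_aux hKpsd (by norm_num)
    obtain ⟨V, hV⟩ : ∃ V : Matrix (Fin n) (Fin n) ℝ, ((1 : ℝ)/2) • K = Vᴴ * V := by
      open scoped MatrixOrder Matrix.Norms.L2Operator in
      obtain ⟨B, hB⟩ := CStarAlgebra.nonneg_iff_eq_star_mul_self.mp hhalf.nonneg
      exact ⟨B, by rw [hB, star_eq_conjTranspose]⟩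
    rw [conjTranspose_eq_transpose_of_trivial] at hV
    set S : Matrix (Fin n) (Fin n) ℝ :=
      Λ - Λ * W - Vᵀ * V - ε' • (1 : Matrix (Fin n) (Fin n) ℝ) with hS
    refine ⟨V, S, ε', hε'pos, ?_, ?_⟩
    · -- skew-symmetry
      have hVVt : (Vᵀ * V)ᵀ = Vᵀ * V := by rw [transpose_mul, transpose_transpose]
      have hST : Sᵀ = Λ - Wᵀ * Λ - Vᵀ * V - ε' • (1 : Matrix (Fin n) (Fin n) ℝ) := by
        rw [hS, transpose_sub, transpose_sub, transpose_sub, transpose_mul, hΛT, hVVt,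
          transpose_smul, transpose_one]
      have hsum : S + Sᵀ = 0 := by
        have h2V : Vᵀ * V + Vᵀ * V = K := by
          rw [← hV, ← two_smul ℝ, smul_smul]
          norm_num
        have hsplit : (Λ - Λ * W - Vᵀ * V - ε' • (1 : Matrix (Fin n) (Fin n) ℝ))
            + (Λ - Wᵀ * Λ - Vᵀ * V - ε' • (1 : Matrix (Fin n) (Fin n) ℝ))
            = ((2 : ℝ) • Λ - Λ * W - Wᵀ * Λ - (2 * ε') • (1 : Matrix (Fin n) (Fin n) ℝ))
              - (Vᵀ * V + Vᵀ * V) := by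
          rw [two_smul, two_mul, add_smul]
          abel
        rw [hS, hST, hsplit, ← hK, h2V, sub_self]
      rw [eq_neg_iff_add_eq_zero]
      exact hsum
    · -- W = 1 - Ψ(VᵀV + ε'1 + S)
      have : Vᵀ * V + ε' • (1 : Matrix (Fin n) (Fin n) ℝ) + S = Λ - Λ * W := by
        rw [hS]; abel
      rw [this, Matrix.mul_sub, hΨΛ, ← Matrix.mul_assoc, hΨΛ, Matrix.one_mul]
      abel
  · -- backward direction
    rintro ⟨V, S, ε, hε, hS, hW⟩
    obtain ⟨c, hc, hcle⟩ := exists_pos_le_aux ψ hψ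
    refine ⟨ε * c, mul_pos hε hc, ?_, ?_⟩
    · have hre : (2 : ℝ) • Λ - Λ * W - Wᵀ * Λ
          = (2 : ℝ) • (Vᵀ * V) + (2 * ε) • (1 : Matrix (Fin n) (Fin n) ℝ) := by
        rw [hW]; exact keyVS V S ε hS
      have : (2 : ℝ) • Λ - Λ * W - Wᵀ * Λ - (2 * (ε * c)) • (Λ * Ψ * Λ)
          = (2 : ℝ) • (Vᵀ * V)
            + ((2 * ε) • (1 : Matrix (Fin n) (Fin n) ℝ) - (2 * (ε * c)) • Λ) := by
        rw [hΛΨΛ, hre]; abel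
      rw [this]
      have h1 : ((2 : ℝ) • (Vᵀ * V)).PosSemidef := by
        have := Matrix.posSemidef_conjTranspose_mul_self V
        rw [conjTranspose_eq_transpose_of_trivial] at this
        exact psd_smul_aux this (by norm_num)
      refine h1.add ?_
      rw [hΛ, ← diagonal_one, ← diagonal_smul, ← diagonal_smul, diagonal_sub]
      refine posSemidef_diagonal_iff.mpr fun i => ?_
      simp only [Pi.sub_apply, Pi.smul_apply, smul_eq_mul, mul_one]
      have h1 : ε * c ≤ ε * ψ i := mul_le_mul_of_nonneg_left (hcle i) hε.le
      have h2 : ε * c * (ψ i)⁻¹ ≤ ε * ψ i * (ψ i)⁻¹ :=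
        mul_le_mul_of_nonneg_right h1 (inv_pos.mpr (hψ i)).le
      have h3 : ε * ψ i * (ψ i)⁻¹ = ε := by
        rw [mul_assoc, mul_inv_cancel₀ (hψ i).ne', mul_one]
      nlinarith [h2, h3]
    · rw [hΛΨΛ, hΛ, ← diagonal_smul]
      refine posDef_diagonal_iff.mpr fun i => ?_
      simp only [Pi.smul_apply, smul_eq_mul]
      exact mul_pos (mul_pos two_pos (mul_pos hε hc)) (inv_pos.mpr (hψ i))
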